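/- Let (W, Y) ∈ 𝒰_K^N be such that some weight w_{k'} = 0. Then for every permutation σ of {1,…,K}, there exists a continuous polygonal map ψ : [0,1] → 𝒰_K^N with ψ(0) = (W, Y), ψ(1) = (W^σ, Y^σ), and t ↦ ℐ(ψ(t)) constant, where W^σ = (w_{σ(k)})_k and Y^σ = (X^{σ(k)})_k. -/

import Mathlib

namespace MCOTPerm

abbrev E (d M K : ℕ) := (Fin K → ℝ) × (Fin K → Fin M → Fin d → ℝ)

section
variable {d M N K : ℕ}
variable (c ϑ : (Fin M → Fin d → ℝ) → ℝ)
variable (φ : Fin N → (Fin M → Fin d → ℝ) → ℝ) (μm : Fin N → ℝ) (A : ℝ)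

def P (p : E d M K) : Prop :=
  (∀ k, 0 ≤ p.1 k) ∧ (∑ k, p.1 k = 1) ∧
  (∑ k, p.1 k * ϑ (p.2 k) ≤ A) ∧ ∀ n, ∑ k, p.1 k * φ n (p.2 k) = μm n

def cost (p : E d M K) : ℝ := ∑ k, p.1 k * c (p.2 k)

def Seg (p q : E d M K) : Prop :=
  ∀ s ∈ Set.Icc (0:ℝ) 1,
    P ϑ φ μm A ((1-s) • p + s • q) ∧ cost c ((1-s) • p + s • q) = cost c p

variable {c ϑ φ μm A}

lemma interp_zero (p q : E d M K) : (1-(0:ℝ)) • p + (0:ℝ) • q = p := by simp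

lemma interp_one (p q : E d M K) : (1-(1:ℝ)) • p + (1:ℝ) • q = q := by simp

lemma interp_fst (p q : E d M K) (s : ℝ) (k : Fin K) :
    ((1-s) • p + s • q).1 k = (1-s) * p.1 k + s * q.1 k := rfl

lemma interp_snd (p q : E d M K) (s : ℝ) (k : Fin K) :
    ((1-s) • p + s • q).2 k = (1-s) • p.2 k + s • q.2 k := rfl

lemma Seg.startP {p q : E d M K} (h : Seg c ϑ φ μm A p q) : P ϑ φ μm A p := by
  have := (h 0 (by norm_num)).1; rwa [interp_zero] at this

lemma Seg.endP {p q : E d M K} (h : Seg c ϑ φ μm A p q) :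
    P ϑ φ μm A q ∧ cost c q = cost c p := by
  have := h 1 (by norm_num); rwa [interp_one] at this

lemma sums_eq (p r : E d M K) (a : Fin K) (ha : p.1 a = 0)
    (h1 : r.1 = p.1) (h2 : ∀ k, k ≠ a → r.2 k = p.2 k)
    (g : (Fin M → Fin d → ℝ) → ℝ) :
    ∑ k, r.1 k * g (r.2 k) = ∑ k, p.1 k * g (p.2 k) := by
  apply Finset.sum_congr rfl
  intro k _
  rcases eq_or_ne k a with rfl | hk
  · rw [h1, ha]; ring
  · rw [h1, h2 k hk]

/-- Segment 1: moving a zero-weight position. -/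
lemma seg_move (p : E d M K) (hp : P ϑ φ μm A p) (a : Fin K) (ha : p.1 a = 0)
    (Z : Fin M → Fin d → ℝ) :
    Seg c ϑ φ μm A p (p.1, fun k => if k = a then Z else p.2 k) := by
  intro s hs
  set q : E d M K := (p.1, fun k => if k = a then Z else p.2 k) with hq
  set r : E d M K := (1-s) • p + s • q with hr
  have h1 : r.1 = p.1 := by
    funext k
    rw [hr, interp_fst]
    show (1-s) * p.1 k + s * p.1 k = p.1 k
    ring
  have h2 : ∀ k, k ≠ a → r.2 k = p.2 k := by
    intro k hk
    rw [hr, interp_snd]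
    show (1-s) • p.2 k + s • (if k = a then Z else p.2 k) = p.2 k
    rw [if_neg hk, ← add_smul]
    simp
  obtain ⟨hp0, hp1, hp2, hp3⟩ := hp
  refine ⟨⟨?_, ?_, ?_, ?_⟩, ?_⟩
  · intro k; rw [h1]; exact hp0 k
  · calc ∑ k, r.1 k = ∑ k, p.1 k := by rw [h1]
      _ = 1 := hp1
  · calc ∑ k, r.1 k * ϑ (r.2 k) = ∑ k, p.1 k * ϑ (p.2 k) := sums_eq p r a ha h1 h2 ϑ
      _ ≤ A := hp2
  · intro n
    calc ∑ k, r.1 k * φ n (r.2 k) = ∑ k, p.1 k * φ n (p.2 k) := sums_eq p r a ha h1 h2 (φ n)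
      _ = μm n := hp3 n
  · exact sums_eq p r a ha h1 h2 c

lemma seg_transfer_sums (p : E d M K) (a b : Fin K) (hab : a ≠ b)
    (hpos : p.2 a = p.2 b) (s : ℝ)
    (r : E d M K) (h2 : r.2 = p.2)
    (h1 : ∀ k, r.1 k = if k = a then p.1 a + s * p.1 b
        else if k = b then (1-s) * p.1 b else p.1 k)
    (g : (Fin M → Fin d → ℝ) → ℝ) :
    ∑ k, r.1 k * g (r.2 k) = ∑ k, p.1 k * g (p.2 k) := by
  have key : ∑ k, (r.1 k * g (r.2 k) - p.1 k * g (p.2 k)) = 0 := by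
    rw [Finset.sum_eq_add a b hab]
    · rw [h1 a, h1 b, if_pos rfl, if_neg (Ne.symm hab), if_pos rfl, h2, hpos]
      ring
    · intro k _ ⟨hka, hkb⟩
      rw [h1 k, if_neg hka, if_neg hkb, h2]
      ring
    · simp
    · simp
  have hd := Finset.sum_sub_distrib
    (f := fun k => r.1 k * g (r.2 k)) (g := fun k => p.1 k * g (p.2 k))
    (s := Finset.univ)
  rw [hd] at key
  linarith

/-- Segment 2: transferring weight between two equal positions. -/
lemma seg_transfer (p : E d M K) (hp : P ϑ φ μm A p) (a b : Fin K) (hab : a ≠ b)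
    (hpos : p.2 a = p.2 b) :
    Seg c ϑ φ μm A p
      (fun k => if k = a then p.1 a + p.1 b else if k = b then 0 else p.1 k, p.2) := by
  intro s hs
  obtain ⟨hs0, hs1⟩ := hs
  set q : E d M K :=
    (fun k => if k = a then p.1 a + p.1 b else if k = b then 0 else p.1 k, p.2) with hq
  set r : E d M K := (1-s) • p + s • q with hr
  have h2 : r.2 = p.2 := by
    funext k
    rw [hr, interp_snd]
    show (1-s) • p.2 k + s • p.2 k = p.2 k
    rw [← add_smul]; simp
  have h1 : ∀ k, r.1 k = if k = a then p.1 a + s * p.1 b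
      else if k = b then (1-s) * p.1 b else p.1 k := by
    intro k
    rw [hr, interp_fst]
    show (1-s) * p.1 k + s * (if k = a then p.1 a + p.1 b else if k = b then 0 else p.1 k) = _
    split_ifs with h h'
    · subst h; ring
    · subst h'; ring
    · ring
  obtain ⟨hp0, hp1, hp2, hp3⟩ := hp
  have hsum1 : ∑ k, r.1 k = ∑ k, p.1 k := by
    have := seg_transfer_sums p a b hab hpos s r h2 h1 (fun _ => 1)
    simpa using this
  refine ⟨⟨?_, ?_, ?_, ?_⟩, ?_⟩
  · intro k
    rw [h1 k]
    rcases eq_or_ne k a with rfl | hka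
    · rw [if_pos rfl]
      have := hp0 k; have := hp0 b
      positivity
    · rcases eq_or_ne k b with rfl | hkb
      · rw [if_neg hka, if_pos rfl]
        have := hp0 k
        have : (0:ℝ) ≤ 1 - s := by linarith
        positivity
      · rw [if_neg hka, if_neg hkb]; exact hp0 k
  · rw [hsum1]; exact hp1
  · calc ∑ k, r.1 k * ϑ (r.2 k) = ∑ k, p.1 k * ϑ (p.2 k) :=
        seg_transfer_sums p a b hab hpos s r h2 h1 ϑ
      _ ≤ A := hp2
  · intro n
    calc ∑ k, r.1 k * φ n (r.2 k) = ∑ k, p.1 k * φ n (p.2 k) :=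
        seg_transfer_sums p a b hab hpos s r h2 h1 (φ n)
      _ = μm n := hp3 n
  · exact seg_transfer_sums p a b hab hpos s r h2 h1 c

variable (c ϑ φ μm A)

/-- Piecewise-linear chain predicate. -/
def PW (p q : E d M K) : Prop :=
  ∃ (L : ℕ) (f : ℕ → E d M K), f 0 = p ∧ f L = q ∧
    ∀ i < L, Seg c ϑ φ μm A (f i) (f (i + 1))

variable {c ϑ φ μm A}

lemma PW.refl {p : E d M K} (hp : P ϑ φ μm A p) : PW c ϑ φ μm A p p := by
  refine ⟨0, fun _ => p, rfl, rfl, by omega⟩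

lemma PW.single {p q : E d M K} (h : Seg c ϑ φ μm A p q) : PW c ϑ φ μm A p q := by
  refine ⟨1, fun i => if i = 0 then p else q, by simp, by simp, ?_⟩
  intro i hi
  interval_cases i
  simpa using h

lemma PW.trans {p q r : E d M K} (h1 : PW c ϑ φ μm A p q) (h2 : PW c ϑ φ μm A q r) :
    PW c ϑ φ μm A p r := by
  obtain ⟨L1, f1, hf10, hf1L, hf1⟩ := h1
  obtain ⟨L2, f2, hf20, hf2L, hf2⟩ := h2
  have key : ∀ i, L1 ≤ i →
      (if i ≤ L1 then f1 i else f2 (i - L1)) = f2 (i - L1) := by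
    intro i hLi
    rcases Nat.eq_or_lt_of_le hLi with rfl | h'
    · rw [if_pos le_rfl, Nat.sub_self, hf20, hf1L]
    · rw [if_neg (by omega)]
  refine ⟨L1 + L2, fun i => if i ≤ L1 then f1 i else f2 (i - L1),
    by simp [hf10], ?_, ?_⟩
  · show (if L1 + L2 ≤ L1 then f1 (L1 + L2) else f2 (L1 + L2 - L1)) = r
    rw [key (L1 + L2) (by omega), Nat.add_sub_cancel_left, hf2L]
  · intro i hi
    rcases lt_or_ge i L1 with h | h
    · simp only [if_pos (by omega : i ≤ L1), if_pos (by omega : i + 1 ≤ L1)]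
      exact hf1 i h
    · simp only [key i h, key (i+1) (by omega)]
      have e : i + 1 - L1 = (i - L1) + 1 := by omega
      rw [e]
      exact hf2 (i - L1) (by omega)

lemma chain_props {L : ℕ} {f : ℕ → E d M K}
    (hf : ∀ i < L, Seg c ϑ φ μm A (f i) (f (i + 1))) (hp : P ϑ φ μm A (f 0)) :
    ∀ i ≤ L, P ϑ φ μm A (f i) ∧ cost c (f i) = cost c (f 0) := by
  intro i hi
  induction i with
  | zero => exact ⟨hp, rfl⟩
  | succ n ih =>
    obtain ⟨h1, h2⟩ := ih (by omega)
    obtain ⟨h3, h4⟩ := (hf n (by omega)).endP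
    exact ⟨h3, h4.trans h2⟩

lemma PW.props {p q : E d M K} (h : PW c ϑ φ μm A p q) (hp : P ϑ φ μm A p) :
    P ϑ φ μm A q ∧ cost c q = cost c p := by
  obtain ⟨L, f, hf0, hfL, hf⟩ := h
  obtain ⟨h1, h2⟩ := chain_props hf (hf0 ▸ hp) L le_rfl
  rw [hfL] at h1 h2
  rw [hf0] at h2
  exact ⟨h1, h2⟩

/-- Right action of a permutation on a configuration. -/
def act (σ : Equiv.Perm (Fin K)) (p : E d M K) : E d M K :=
  (fun k => p.1 (σ k), fun k => p.2 (σ k))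

lemma act_one (p : E d M K) : act 1 p = p := rfl

lemma act_act (σ τ : Equiv.Perm (Fin K)) (p : E d M K) :
    act σ (act τ p) = act (τ * σ) p := rfl

lemma P.act {σ : Equiv.Perm (Fin K)} {p : E d M K} (hp : P ϑ φ μm A p) :
    P ϑ φ μm A (act σ p) := by
  obtain ⟨h0, h1, h2, h3⟩ := hp
  refine ⟨fun k => h0 _, ?_, ?_, fun n => ?_⟩
  · exact (Equiv.sum_comp σ (fun k => p.1 k)).trans h1
  · exact le_of_le_of_eq (le_of_eq (Equiv.sum_comp σ (fun k => p.1 k * ϑ (p.2 k)))) rfl |>.trans h2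
  · exact (Equiv.sum_comp σ (fun k => p.1 k * φ n (p.2 k))).trans (h3 n)

/-- The basic swap path: the zero weight index is one end of the swap. -/
lemma pw_swap_hole (p : E d M K) (hp : P ϑ φ μm A p) (a : Fin K)
    (ha : p.1 a = 0) (j : Fin K) :
    PW c ϑ φ μm A p (act (Equiv.swap a j) p) := by
  rcases eq_or_ne j a with rfl | hja
  · rw [Equiv.swap_self]
    exact (act_one p) ▸ PW.refl hp
  -- step 1 : move the position at `a` to `p.2 j`
  have s1 : Seg c ϑ φ μm A p (p.1, fun k => if k = a then p.2 j else p.2 k) :=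
    seg_move p hp a ha (p.2 j)
  set p1 : E d M K := (p.1, fun k => if k = a then p.2 j else p.2 k) with hp1
  have hp1P : P ϑ φ μm A p1 := s1.endP.1
  -- step 2 : transfer weight from `j` to `a`
  have hpos : p1.2 a = p1.2 j := by
    show (if a = a then p.2 j else p.2 a) = (if j = a then p.2 j else p.2 j)
    simp
  have haj : a ≠ j := Ne.symm hja
  have s2 : Seg c ϑ φ μm A p1
      (fun k => if k = a then p1.1 a + p1.1 j else if k = j then 0 else p1.1 k, p1.2) :=
    seg_transfer p1 hp1P a j haj hpos
  set p2 : E d M K :=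
    (fun k => if k = a then p1.1 a + p1.1 j else if k = j then 0 else p1.1 k, p1.2) with hp2
  have hp2P : P ϑ φ μm A p2 := s2.endP.1
  -- step 3 : move the (now weightless) position at `j` to `p.2 a`
  have hj0 : p2.1 j = 0 := by
    show (if j = a then p1.1 a + p1.1 j else if j = j then 0 else p1.1 j) = 0
    rw [if_neg hja, if_pos rfl]
  have s3 : Seg c ϑ φ μm A p2 (p2.1, fun k => if k = j then p.2 a else p2.2 k) :=
    seg_move p2 hp2P j hj0 (p.2 a)
  have hfinal : (p2.1, fun k => if k = j then p.2 a else p2.2 k)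
      = act (Equiv.swap a j) p := by
    refine Prod.ext ?_ ?_
    · funext k
      show (if k = a then p1.1 a + p1.1 j else if k = j then 0 else p1.1 k)
          = p.1 (Equiv.swap a j k)
      rcases eq_or_ne k a with rfl | hka
      · rw [if_pos rfl, Equiv.swap_apply_left]
        show p.1 k + p.1 j = p.1 j
        rw [ha, zero_add]
      · rcases eq_or_ne k j with rfl | hkj
        · rw [if_neg hka, if_pos rfl, Equiv.swap_apply_right, ha]
        · rw [if_neg hka, if_neg hkj, Equiv.swap_apply_of_ne_of_ne hka hkj]
    · funext k
      show (if k = j then p.2 a else if k = a then p.2 j else p.2 k)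
          = p.2 (Equiv.swap a j k)
      rcases eq_or_ne k j with rfl | hkj
      · rw [if_pos rfl, Equiv.swap_apply_right]
      · rcases eq_or_ne k a with rfl | hka
        · rw [if_neg (Ne.symm hja), if_pos rfl, Equiv.swap_apply_left]
        · rw [if_neg hkj, if_neg hka, Equiv.swap_apply_of_ne_of_ne hka hkj]
  exact ((PW.single s1).trans (PW.single s2)).trans (hfinal ▸ PW.single s3)

/-- Path realizing an arbitrary transposition, given a zero weight somewhere. -/
lemma pw_swap_any (p : E d M K) (hp : P ϑ φ μm A p) (a : Fin K)
    (ha : p.1 a = 0) (x y : Fin K) :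
    PW c ϑ φ μm A p (act (Equiv.swap x y) p) := by
  rcases eq_or_ne x y with rfl | hxy
  · rw [Equiv.swap_self]
    exact (act_one p) ▸ PW.refl hp
  rcases eq_or_ne a x with rfl | hax
  · exact pw_swap_hole p hp a ha y
  rcases eq_or_ne a y with rfl | hay
  · rw [Equiv.swap_comm]
    exact pw_swap_hole p hp a ha x
  -- general case: three swaps through the hole
  have key : Equiv.swap a x * Equiv.swap x y * Equiv.swap y a = Equiv.swap x y := by
    apply Equiv.ext
    intro k
    simp only [Equiv.Perm.mul_apply, Equiv.swap_apply_def]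
    split_ifs <;> simp_all
  have w1 := pw_swap_hole (c := c) p hp a ha x
  set q1 := act (Equiv.swap a x) p with hq1
  have hq1P : P ϑ φ μm A q1 := hp.act
  have hq1hole : q1.1 x = 0 := by
    show p.1 (Equiv.swap a x x) = 0
    rw [Equiv.swap_apply_right]; exact ha
  have w2 := pw_swap_hole (c := c) q1 hq1P x hq1hole y
  set q2 := act (Equiv.swap x y) q1 with hq2
  have hq2P : P ϑ φ μm A q2 := hq1P.act
  have hq2hole : q2.1 y = 0 := by
    show q1.1 (Equiv.swap x y y) = 0
    rw [Equiv.swap_apply_right]; exact hq1hole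
  have w3 := pw_swap_hole (c := c) q2 hq2P y hq2hole a
  have : act (Equiv.swap y a) q2 = act (Equiv.swap x y) p := by
    rw [hq2, hq1, act_act, act_act, ← mul_assoc, key]
  rw [this] at w3
  exact (w1.trans w2).trans w3

/-- Main chain lemma: any permutation can be realized by a piecewise-linear
chain, given a vanishing weight. -/
lemma pw_perm (σ : Equiv.Perm (Fin K)) :
    ∀ p : E d M K, P ϑ φ μm A p → ∀ a, p.1 a = 0 →
      PW c ϑ φ μm A p (act σ p) := by
  refine Equiv.Perm.swap_induction_on σ ?_ ?_
  · intro p hp a ha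
    exact (act_one p) ▸ PW.refl hp
  · intro f x y hxy ih p hp a ha
    have w1 := pw_swap_any (c := c) p hp a ha x y
    have hqP : P ϑ φ μm A (act (Equiv.swap x y) p) := hp.act
    have hqhole : (act (Equiv.swap x y) p).1 (Equiv.swap x y a) = 0 := by
      show p.1 (Equiv.swap x y (Equiv.swap x y a)) = 0
      rw [Equiv.swap_apply_self]; exact ha
    have w2 := ih (act (Equiv.swap x y) p) hqP _ hqhole
    rw [act_act] at w2
    exact w1.trans w2

lemma interp_same (p : E d M K) (s : ℝ) : (1-s) • p + s • p = p := by
  rw [← add_smul]; simp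

lemma interp_eq (x y : E d M K) (s : ℝ) :
    x + s • (y - x) = (1-s) • x + s • y := by
  rw [smul_sub, sub_smul, one_smul]; abel

lemma seg_refl {p : E d M K} (hp : P ϑ φ μm A p) : Seg c ϑ φ μm A p p := by
  intro s hs
  rw [interp_same]
  exact ⟨hp, rfl⟩

/-- Packaging: a piecewise-linear chain gives a continuous polygonal path. -/
lemma package {p q : E d M K} (h : PW c ϑ φ μm A p q) (hp : P ϑ φ μm A p) :
    ∃ ψ : ℝ → E d M K,
      ContinuousOn ψ (Set.Icc 0 1) ∧
      ψ 0 = p ∧ ψ 1 = q ∧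
      (∀ t ∈ Set.Icc (0:ℝ) 1, P ϑ φ μm A (ψ t)) ∧
      (∃ (L : ℕ) (τ : Fin (L + 1) → ℝ), Monotone τ ∧ τ 0 = 0 ∧ τ (Fin.last L) = 1 ∧
        ∀ i : Fin L, ∀ s ∈ Set.Icc (0:ℝ) 1,
          ψ ((1 - s) * τ i.castSucc + s * τ i.succ)
            = (1 - s) • ψ (τ i.castSucc) + s • ψ (τ i.succ)) ∧
      (∀ t ∈ Set.Icc (0:ℝ) 1, cost c (ψ t) = cost c p) := by
  -- normalize to a chain of positive length
  obtain ⟨L, f, hL, hf0, hfL, hseg⟩ :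
      ∃ (L : ℕ) (f : ℕ → E d M K), 0 < L ∧ f 0 = p ∧ f L = q ∧
        ∀ i < L, Seg c ϑ φ μm A (f i) (f (i + 1)) := by
    obtain ⟨L0, f0, hf00, hf0L, hseg0⟩ := h
    rcases Nat.eq_zero_or_pos L0 with rfl | hpos
    · refine ⟨0 + 1, fun _ => p, Nat.succ_pos 0, rfl, ?_, ?_⟩
      · rw [← hf00, hf0L]
      · intro i _
        exact seg_refl hp
    · exact ⟨L0, f0, hpos, hf00, hf0L, hseg0⟩
  have hLr : (0:ℝ) < (L:ℝ) := by exact_mod_cast hL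
  have hLne : (L:ℝ) ≠ 0 := ne_of_gt hLr
  set ψ : ℝ → E d M K := fun t =>
    f 0 + ∑ i ∈ Finset.range L, (min 1 (max 0 (t * (L:ℝ) - (i:ℝ)))) • (f (i+1) - f i)
    with hψ
  -- evaluation on each subinterval
  have heval : ∀ j : ℕ, j < L → ∀ s : ℝ, 0 ≤ s → s ≤ 1 →
      ψ (((j:ℝ) + s)/(L:ℝ)) = f j + s • (f (j+1) - f j) := by
    intro j hj s hs0 hs1
    have ht : (((j:ℝ) + s)/(L:ℝ)) * (L:ℝ) = (j:ℝ) + s := div_mul_cancel₀ _ hLne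
    rw [hψ]
    simp only [ht]
    rw [Finset.range_eq_Ico, ← Finset.sum_Ico_consecutive _ (Nat.zero_le (j+1)) hj]
    have h2 : ∑ i ∈ Finset.Ico (j+1) L,
        (min 1 (max 0 ((j:ℝ) + s - (i:ℝ)))) • (f (i+1) - f i) = 0 := by
      apply Finset.sum_eq_zero
      intro i hi
      obtain ⟨hi1, _⟩ := Finset.mem_Ico.mp hi
      have hcast : (j:ℝ) + 1 ≤ (i:ℝ) := by exact_mod_cast hi1
      have : (j:ℝ) + s - (i:ℝ) ≤ 0 := by linarith
      rw [max_eq_left this, min_eq_right zero_le_one, zero_smul]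
    rw [h2, add_zero, ← Finset.range_eq_Ico, Finset.sum_range_succ]
    have h3 : (j:ℝ) + s - (j:ℝ) = s := by ring
    rw [h3, max_eq_right hs0, min_eq_right hs1]
    have h4 : ∀ i ∈ Finset.range j,
        (min 1 (max 0 ((j:ℝ) + s - (i:ℝ)))) • (f (i+1) - f i) = f (i+1) - f i := by
      intro i hi
      have hij : i < j := Finset.mem_range.mp hi
      have hcast : (i:ℝ) + 1 ≤ (j:ℝ) := by exact_mod_cast hij
      have h5 : (1:ℝ) ≤ (j:ℝ) + s - (i:ℝ) := by linarith
      rw [max_eq_right (by linarith), min_eq_left h5, one_smul]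
    rw [Finset.sum_congr rfl h4, Finset.sum_range_sub (fun i => f i)]
    abel
  -- node values
  have hnode : ∀ j : ℕ, j ≤ L → ψ ((j:ℝ) / (L:ℝ)) = f j := by
    intro j hj
    rcases Nat.lt_or_ge j L with hlt | hge
    · have := heval j hlt 0 le_rfl zero_le_one
      rw [add_zero, zero_smul, add_zero] at this
      exact this
    · have hjL : j = L := le_antisymm hj hge
      subst hjL
      have heq := heval (j-1) (by omega) 1 zero_le_one le_rfl
      rw [one_smul] at heq
      have hc : ((j-1:ℕ):ℝ) = (j:ℝ) - 1 := by
        have h1 : 1 ≤ j := by omega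
        push_cast [h1]
        ring
      have he : j - 1 + 1 = j := by omega
      rw [hc, he] at heq
      have harg : (j:ℝ) - 1 + 1 = (j:ℝ) := by ring
      rw [harg] at heq
      rw [heq]
      abel
  -- main pointwise property
  have hchain := chain_props hseg (hf0 ▸ hp)
  have hmain : ∀ t : ℝ, 0 ≤ t → t ≤ 1 →
      P ϑ φ μm A (ψ t) ∧ cost c (ψ t) = cost c p := by
    intro t ht0 ht1
    obtain ⟨j, hjL, s, hs0, hs1, hts⟩ :
        ∃ j : ℕ, j < L ∧ ∃ s : ℝ, 0 ≤ s ∧ s ≤ 1 ∧ t = ((j:ℝ) + s)/(L:ℝ) := by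
      set u : ℝ := t * (L:ℝ) with hu
      have hu0 : 0 ≤ u := mul_nonneg ht0 (le_of_lt hLr)
      have huL : u ≤ (L:ℝ) := by
        rw [hu]
        nlinarith
      rcases Nat.lt_or_ge (⌊u⌋₊) L with hfl | hfl
      · refine ⟨⌊u⌋₊, hfl, u - ((⌊u⌋₊:ℕ):ℝ), ?_, ?_, ?_⟩
        · have := Nat.floor_le hu0
          linarith
        · have := Nat.lt_floor_add_one u
          linarith
        · rw [add_sub_cancel, hu, mul_div_cancel_right₀ _ hLne]
      · have hfleu : ((L:ℕ):ℝ) ≤ u := by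
          calc ((L:ℕ):ℝ) ≤ ((⌊u⌋₊:ℕ):ℝ) := by exact_mod_cast hfl
            _ ≤ u := Nat.floor_le hu0
        have huLeq : u = (L:ℝ) := le_antisymm huL hfleu
        refine ⟨L - 1, by omega, 1, zero_le_one, le_rfl, ?_⟩
        have hc : ((L-1:ℕ):ℝ) = (L:ℝ) - 1 := by
          have h1 : 1 ≤ L := by omega
          push_cast [h1]
          ring
        rw [hc]
        have h6 : ((L:ℝ) - 1 + 1) = (L:ℝ) := by ring
        rw [h6, div_self hLne]
        have h7 : t * (L:ℝ) = 1 * (L:ℝ) := by rw [one_mul, ← hu, huLeq]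
        exact mul_right_cancel₀ hLne h7
    have hPC := (hseg j hjL) s ⟨hs0, hs1⟩
    have hcostj : cost c (f j) = cost c p := by
      have := (hchain j (le_of_lt hjL)).2
      rw [hf0] at this
      exact this
    rw [hts, heval j hjL s hs0 hs1, interp_eq]
    exact ⟨hPC.1, hPC.2.trans hcostj⟩
  refine ⟨ψ, ?_, ?_, ?_, fun t ht => (hmain t ht.1 ht.2).1, ?_,
    fun t ht => (hmain t ht.1 ht.2).2⟩
  · -- continuity
    apply Continuous.continuousOn
    rw [hψ]
    apply Continuous.add continuous_const
    apply continuous_finset_sum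
    intro i _
    apply Continuous.smul (f := fun a : ℝ => min (1:ℝ) (max 0 (a * (L:ℝ) - (i:ℝ)))) _ continuous_const
    exact continuous_const.min (continuous_const.max
      ((continuous_id.mul continuous_const).sub continuous_const))
  · have := hnode 0 (Nat.zero_le L)
    rw [Nat.cast_zero, zero_div] at this
    rw [this, hf0]
  · have := hnode L le_rfl
    rw [div_self hLne] at this
    rw [this, hfL]
  · -- polygonal structure
    refine ⟨L, fun i => ((i:ℕ):ℝ)/(L:ℝ), ?_, ?_, ?_, ?_⟩
    · intro i j hij
      have hv : ((i:ℕ):ℝ) ≤ ((j:ℕ):ℝ) := by exact_mod_cast hij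
      show ((i:ℕ):ℝ)/(L:ℝ) ≤ ((j:ℕ):ℝ)/(L:ℝ)
      gcongr
    · simp
    · simp [div_self hLne]
    · intro i s ⟨hs0, hs1⟩
      simp only [Fin.coe_castSucc, Fin.val_succ]
      push_cast
      have harg : (1 - s) * (((i:ℕ):ℝ)/(L:ℝ)) + s * (((((i:ℕ):ℝ))+1)/(L:ℝ))
          = (((i:ℕ):ℝ) + s)/(L:ℝ) := by
        field_simp
        ring
      rw [harg, heval i i.isLt s hs0 hs1]
      have n1 : ψ (((i:ℕ):ℝ)/(L:ℝ)) = f i := hnode i (le_of_lt i.isLt)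
      have n2 : ψ ((((i:ℕ):ℝ)+1)/(L:ℝ)) = f ((i:ℕ)+1) := by
        have := hnode ((i:ℕ)+1) i.isLt
        push_cast at this
        exact this
      rw [n1, n2, interp_eq]

end
end MCOTPerm




/-- Lemma 6.2 (permutation lemma): if `(W, Y) ∈ 𝒰_K^N` has a vanishing weight,
then for any permutation `σ` of `{1,…,K}` there is a continuous polygonal path
in `𝒰_K^N` joining `(W, Y)` to `(W^σ, Y^σ)` along which the cost
`ℐ(W,Y) = Σ_k w_k c(X^k)` is constant. -/
theorem mcot_permutation_path (d M N K : ℕ)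
    (c ϑ : (Fin M → Fin d → ℝ) → ℝ)
    (hc : ∀ X, 0 ≤ c X) (hϑ : ∀ X, 0 ≤ ϑ X)
    (φ : Fin N → (Fin M → Fin d → ℝ) → ℝ) (μm : Fin N → ℝ)
    (A : ℝ) (hA : 0 < A)
    (U : Set ((Fin K → ℝ) × (Fin K → Fin M → Fin d → ℝ)))
    (hU : U = {p | (∀ k, 0 ≤ p.1 k) ∧ (∑ k, p.1 k = 1) ∧
      (∑ k, p.1 k * ϑ (p.2 k) ≤ A) ∧ ∀ n, ∑ k, p.1 k * φ n (p.2 k) = μm n})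
    (I : ((Fin K → ℝ) × (Fin K → Fin M → Fin d → ℝ)) → ℝ)
    (hI : I = fun p => ∑ k, p.1 k * c (p.2 k))
    (W : Fin K → ℝ) (Y : Fin K → Fin M → Fin d → ℝ)
    (hWY : (W, Y) ∈ U) (k' : Fin K) (hk' : W k' = 0)
    (σ : Equiv.Perm (Fin K)) :
    ∃ ψ : ℝ → (Fin K → ℝ) × (Fin K → Fin M → Fin d → ℝ),
      ContinuousOn ψ (Set.Icc 0 1) ∧
      ψ 0 = (W, Y) ∧ ψ 1 = (fun k => W (σ k), fun k => Y (σ k)) ∧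
      (∀ t ∈ Set.Icc (0:ℝ) 1, ψ t ∈ U) ∧
      (∃ (L : ℕ) (τ : Fin (L + 1) → ℝ), Monotone τ ∧ τ 0 = 0 ∧ τ (Fin.last L) = 1 ∧
        ∀ i : Fin L, ∀ s ∈ Set.Icc (0:ℝ) 1,
          ψ ((1 - s) * τ i.castSucc + s * τ i.succ)
            = (1 - s) • ψ (τ i.castSucc) + s • ψ (τ i.succ)) ∧
      (∀ t ∈ Set.Icc (0:ℝ) 1, I (ψ t) = I (W, Y)) := by
  subst hU hI
  have hp : MCOTPerm.P ϑ φ μm A (W, Y) := hWY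
  have hpath := MCOTPerm.pw_perm (c := c) σ (W, Y) hp k' hk'
  obtain ⟨ψ, hcont, h0, h1, hmem, hpoly, hcost⟩ := MCOTPerm.package hpath hp
  exact ⟨ψ, hcont, h0, h1, hmem, hpoly, hcost⟩
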